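/- Let R be a commutative ring and M a finitely generated R-module that is torsionless and faithful. Then there is an injective R-algebra homomorphism from the center Z(End_R(M)) of End_R(M) into End_R(τ(M)), determined by sending q ∈ Z(End_R(M)) to the endomorphism of τ(M) taking Σ_i α_i(m_i) to Σ_i α_i(q(m_i)) for α_i ∈ Hom_R(M,R) and m_i ∈ M. -/

import Mathlib

universe u v

/-- The trace ideal of a module: the ideal generated by all images of maps `M →ₗ[R] R`. -/
def traceIdeal (R : Type u) (M : Type v) [CommRing R] [AddCommGroup M] [Module R M] :
    Ideal R :=
  ⨆ f : M →ₗ[R] R, LinearMap.range f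

theorem apply_mem_traceIdeal {R : Type u} {M : Type v} [CommRing R] [AddCommGroup M]
    [Module R M] (f : M →ₗ[R] R) (m : M) : f m ∈ traceIdeal R M :=
  Submodule.mem_iSup_of_mem f (LinearMap.mem_range_self f m)

section Aux

variable {R : Type u} {M : Type v} [CommRing R] [AddCommGroup M] [Module R M]

lemma key_central (q : Module.End R M) (hq : q ∈ Subalgebra.center R (Module.End R M))
    (α β : M →ₗ[R] R) (m x : M) : α (q m) * β x = α m * β (q x) := by
  have h := (Subalgebra.mem_center_iff.mp hq) (β.smulRight m)
  have h2 := LinearMap.congr_fun h x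
  simp only [Module.End.mul_apply, LinearMap.smulRight_apply] at h2
  have := congrArg α h2
  simp only [map_smul, smul_eq_mul] at this
  rw [mul_comm, mul_comm (α m)]
  exact this.symm

lemma eq_zero_of_mul_dual (htl : Function.Injective (Module.Dual.eval R M))
    (hf : Module.annihilator R M = ⊥) {s : R}
    (h : ∀ (β : M →ₗ[R] R) (x : M), s * β x = 0) : s = 0 := by
  have hs : s ∈ Module.annihilator R M := by
    rw [Module.mem_annihilator]
    intro m
    apply htl
    ext β
    simpa [Module.Dual.eval, mul_comm] using h β m
  simpa [hf] using hs

/-- The defining "spec" of the endomorphism. -/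
def Fspec (q : Module.End R M) (t s : R) : Prop :=
  ∀ (β : M →ₗ[R] R) (x : M), s * β x = t * β (q x)

lemma Fspec_unique (htl : Function.Injective (Module.Dual.eval R M))
    (hf : Module.annihilator R M = ⊥) {q : Module.End R M} {t s₁ s₂ : R}
    (h₁ : Fspec q t s₁) (h₂ : Fspec q t s₂) : s₁ = s₂ := by
  have : s₁ - s₂ = 0 := by
    apply eq_zero_of_mul_dual htl hf
    intro β x
    rw [sub_mul, h₁ β x, h₂ β x, sub_self]
  exact sub_eq_zero.mp this

lemma exists_F (q : Module.End R M) (hq : q ∈ Subalgebra.center R (Module.End R M))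
    {t : R} (ht : t ∈ traceIdeal R M) :
    ∃ s, s ∈ traceIdeal R M ∧ Fspec q t s := by
  refine Submodule.iSup_induction (motive := fun t => ∃ s, s ∈ traceIdeal R M ∧ Fspec q t s)
    (fun f : M →ₗ[R] R => LinearMap.range f) ht ?_ ?_ ?_
  · rintro f _ ⟨m, rfl⟩
    exact ⟨f (q m), apply_mem_traceIdeal f (q m), fun β x => key_central q hq f β m x⟩
  · exact ⟨0, Submodule.zero_mem _, fun β x => by simp [Fspec]⟩
  · rintro a b ⟨s₁, hs₁, hsp₁⟩ ⟨s₂, hs₂, hsp₂⟩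
    exact ⟨s₁ + s₂, Submodule.add_mem _ hs₁ hs₂, fun β x => by
      rw [add_mul, hsp₁ β x, hsp₂ β x, add_mul]⟩

variable (htl : Function.Injective (Module.Dual.eval R M))
    (hf : Module.annihilator R M = ⊥)

noncomputable def Fend (q : Module.End R M) (hq : q ∈ Subalgebra.center R (Module.End R M)) :
    Module.End R (traceIdeal R M) where
  toFun t := ⟨(exists_F q hq t.2).choose, (exists_F q hq t.2).choose_spec.1⟩
  map_add' a b := by
    have h := (exists_F q hq (a + b).2).choose_spec.2
    have ha := (exists_F q hq a.2).choose_spec.2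
    have hb := (exists_F q hq b.2).choose_spec.2
    ext
    refine Fspec_unique htl hf h fun β x => ?_
    push_cast
    rw [add_mul, ha β x, hb β x, add_mul]
  map_smul' r a := by
    have h := (exists_F q hq (r • a).2).choose_spec.2
    have ha := (exists_F q hq a.2).choose_spec.2
    ext
    refine Fspec_unique htl hf h fun β x => ?_
    push_cast
    simp only [RingHom.id_apply, smul_eq_mul]
    rw [mul_assoc, ha β x, mul_assoc]
    rfl

lemma Fend_spec (q : Module.End R M) (hq : q ∈ Subalgebra.center R (Module.End R M))
    (t : traceIdeal R M) : Fspec q (t : R) ((Fend htl hf q hq t : R)) :=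
  (exists_F q hq t.2).choose_spec.2

end Aux

section Alg

variable {R : Type u} {M : Type v} [CommRing R] [AddCommGroup M] [Module R M]
    (htl : Function.Injective (Module.Dual.eval R M))
    (hf : Module.annihilator R M = ⊥)

lemma Fend_eq (q : Module.End R M) (hq : q ∈ Subalgebra.center R (Module.End R M))
    (t : traceIdeal R M) {s : R} (hs : Fspec q (t : R) s) :
    (Fend htl hf q hq t : R) = s :=
  Fspec_unique htl hf (Fend_spec htl hf q hq t) hs

noncomputable def sigmaAlg :
    Subalgebra.center R (Module.End R M) →ₐ[R] Module.End R (traceIdeal R M) where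
  toFun q := Fend htl hf q.1 q.2
  map_one' := by
    apply LinearMap.ext; intro t; apply Subtype.ext
    show (Fend htl hf ((1 : Subalgebra.center R (Module.End R M)) : Module.End R M) _ t : R)
      = ((1 : Module.End R (traceIdeal R M)) t : R)
    exact Fend_eq htl hf _ _ t fun β x => rfl
  map_mul' q₁ q₂ := by
    apply LinearMap.ext; intro t; apply Subtype.ext
    show (Fend htl hf ((q₁ * q₂ : _) : Module.End R M) (q₁ * q₂).2 t : R)
      = (Fend htl hf q₁.1 q₁.2 (Fend htl hf q₂.1 q₂.2 t) : R)
    refine Fend_eq htl hf _ _ t fun β x => ?_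
    have h1 := Fend_spec htl hf q₁.1 q₁.2 (Fend htl hf q₂.1 q₂.2 t) β x
    have h2 := Fend_spec htl hf q₂.1 q₂.2 t β (q₁.1 x)
    have hc : q₂.1 * q₁.1 = q₁.1 * q₂.1 := (Subalgebra.mem_center_iff.mp q₁.2) q₂.1
    calc (Fend htl hf q₁.1 q₁.2 (Fend htl hf q₂.1 q₂.2 t) : R) * β x
        = (Fend htl hf q₂.1 q₂.2 t : R) * β (q₁.1 x) := h1
      _ = (t : R) * β (q₂.1 (q₁.1 x)) := h2
      _ = (t : R) * β (((q₁ * q₂ : _) : Module.End R M) x) := by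
          have : q₂.1 (q₁.1 x) = (q₂.1 * q₁.1) x := rfl
          rw [this, hc]; rfl
  map_zero' := by
    apply LinearMap.ext; intro t; apply Subtype.ext
    show (Fend htl hf ((0 : Subalgebra.center R (Module.End R M)) : Module.End R M)
        (0 : Subalgebra.center R (Module.End R M)).2 t : R)
      = ((0 : Module.End R (traceIdeal R M)) t : R)
    refine Fend_eq htl hf _ _ t fun β x => ?_
    show (((0 : Module.End R (traceIdeal R M)) t : R)) * β x
      = (t : R) * β ((0 : Module.End R M) x)
    simp
  map_add' q₁ q₂ := by
    apply LinearMap.ext; intro t; apply Subtype.ext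
    show (Fend htl hf ((q₁ + q₂ : _) : Module.End R M) (q₁ + q₂).2 t : R)
      = (Fend htl hf q₁.1 q₁.2 t : R) + (Fend htl hf q₂.1 q₂.2 t : R)
    refine Fend_eq htl hf _ _ t fun β x => ?_
    have h1 := Fend_spec htl hf q₁.1 q₁.2 t β x
    have h2 := Fend_spec htl hf q₂.1 q₂.2 t β x
    rw [add_mul, h1, h2]
    show _ = (t : R) * β (q₁.1 x + q₂.1 x)
    rw [map_add, mul_add]
  commutes' r := by
    apply LinearMap.ext; intro t; apply Subtype.ext
    show (Fend htl hf ((algebraMap R (Subalgebra.center R (Module.End R M)) r : _) :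
          Module.End R M) (algebraMap R (Subalgebra.center R (Module.End R M)) r).2 t : R)
      = ((algebraMap R (Module.End R (traceIdeal R M)) r) t : R)
    refine Fend_eq htl hf _ _ t fun β x => ?_
    show ((r • t : traceIdeal R M) : R) * β x = (t : R) * β (r • x)
    rw [map_smul, smul_eq_mul, Submodule.coe_smul, smul_eq_mul]
    ring

lemma sigmaAlg_eq (q : Subalgebra.center R (Module.End R M)) (t : traceIdeal R M) {s : R}
    (hs : Fspec (q : Module.End R M) (t : R) s) :
    ((sigmaAlg htl hf q) t : R) = s :=
  Fend_eq htl hf _ q.2 t hs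

lemma sigmaAlg_spec (q : Subalgebra.center R (Module.End R M)) (t : traceIdeal R M) :
    Fspec (q : Module.End R M) (t : R) ((sigmaAlg htl hf q) t : R) :=
  Fend_spec htl hf _ q.2 t

end Alg

/-- Let `R` be a commutative ring and `M` a finitely generated, torsionless and faithful
`R`-module.  Then there is an injective `R`-algebra homomorphism from the center of
`End_R(M)` into `End_R(τ(M))`, sending `q` to the endomorphism taking `Σ αᵢ(mᵢ)` to
`Σ αᵢ(q(mᵢ))`. -/
theorem center_end_into_trace_end (R : Type u) (M : Type v) [CommRing R] [AddCommGroup M]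
    [Module R M] [Module.Finite R M]
    (htorsionless : Function.Injective (Module.Dual.eval R M))
    (hfaithful : Module.annihilator R M = ⊥) :
    ∃ σ' : Subalgebra.center R (Module.End R M) →ₐ[R] Module.End R (traceIdeal R M),
      Function.Injective σ' ∧
      ∀ (q : Subalgebra.center R (Module.End R M)) (n : ℕ)
          (α : Fin n → (M →ₗ[R] R)) (m : Fin n → M),
        (σ' q ⟨∑ i, α i (m i),
            Submodule.sum_mem _ fun i _ => apply_mem_traceIdeal (α i) (m i)⟩ : R)
          = ∑ i, α i ((q : Module.End R M) (m i)) := by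
  refine ⟨sigmaAlg htorsionless hfaithful, ?_, ?_⟩
  · intro q₁ q₂ h
    apply Subtype.ext
    apply LinearMap.ext; intro y
    have key : ∀ (t : traceIdeal R M) (β : M →ₗ[R] R),
        (t : R) * β (q₁.1 y) = (t : R) * β (q₂.1 y) := by
      intro t β
      have h1 := sigmaAlg_spec htorsionless hfaithful q₁ t β y
      have h2 := sigmaAlg_spec htorsionless hfaithful q₂ t β y
      rw [← h1, ← h2, h]
    have hd : ∀ β : M →ₗ[R] R, β (q₁.1 y - q₂.1 y) = 0 := by
      intro β
      refine eq_zero_of_mul_dual htorsionless hfaithful fun γ x => ?_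
      have := key ⟨γ x, apply_mem_traceIdeal γ x⟩ β
      rw [mul_comm]
      simp only [map_sub, mul_sub]
      rw [this]
      ring
    have : q₁.1 y - q₂.1 y = 0 := by
      apply htorsionless
      ext β
      simpa [Module.Dual.eval] using hd β
    have := sub_eq_zero.mp this
    exact this
  · intro q n α m
    refine sigmaAlg_eq htorsionless hfaithful q _ fun β x => ?_
    rw [Finset.sum_mul, Finset.sum_mul]
    exact Finset.sum_congr rfl fun i _ => key_central (q : Module.End R M) q.2 (α i) β (m i) x
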